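/- Let q be a power of 2, n | q−1, and α ∈ F_q a primitive n-th root of unity. Let D be a nonzero cyclic code of length n over F_q with complete defining set Z(D), and let m be a positive divisor of n. Assume there exist integers l and t such that (i) the coset α^l G_m is disjoint from Z(D), and (ii) α^{s+l+tm} ∈ Z(D) for all s = 1, 2, …, m−1. Then the minimum distance of D equals exactly m. -/

import Mathlib

open scoped BigOperators

namespace LRC

/-- Hamming weight of a vector. -/
noncomputable def hwt {n : ℕ} {F : Type*} [Zero F] (c : Fin n → F) : ℕ :=
  Nat.card {i : Fin n // c i ≠ 0}

/-- A linear code is cyclic if it is closed under the cyclic shift of coordinates. -/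
def IsCyclicCode {n : ℕ} [NeZero n] {F : Type*} [Field F] (C : Submodule F (Fin n → F)) : Prop :=
  ∀ c ∈ C, (fun i : Fin n => c (i - 1)) ∈ C

/-- `A` is a recovery set for coordinate `i` of the code `C`. -/
def IsRecoverySet {n : ℕ} {F : Type*} [Field F] (C : Submodule F (Fin n → F)) (i : Fin n)
    (A : Finset (Fin n)) : Prop :=
  i ∉ A ∧ ∃ φ : ((j : A) → F) → F, ∀ c ∈ C, c i = φ (fun j => c j)

/-- The code `C` has locality `r`. -/
def HasLocality {n : ℕ} {F : Type*} [Field F] (C : Submodule F (Fin n → F)) (r : ℕ) : Prop :=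
  ∀ i : Fin n, ∃ A : Finset (Fin n), A.card ≤ r ∧ IsRecoverySet C i A

/-- Complete defining set of zeros of a cyclic code (locator field = symbol field). -/
def definingSet {n : ℕ} {F : Type*} [Field F] (C : Submodule F (Fin n → F)) : Set F :=
  {β | β ^ n = 1 ∧ ∀ c ∈ C, ∑ j : Fin n, c j * β ^ (j : ℕ) = 0}

/-- Complete defining set of zeros of a cyclic code in an extension (locator) field `K`. -/
def definingSetExt (n : ℕ) {F K : Type*} [Field F] [Field K] [Algebra F K]
    (C : Submodule F (Fin n → F)) : Set K :=
  {β | β ^ n = 1 ∧ ∀ c ∈ C, ∑ j : Fin n, algebraMap F K (c j) * β ^ (j : ℕ) = 0}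

/-- The cyclic code with a given set of zeros. -/
def codeOfZeros (n : ℕ) {F : Type*} [Field F] (Z : Set F) : Submodule F (Fin n → F) where
  carrier := {c | ∀ β ∈ Z, ∑ j : Fin n, c j * β ^ (j : ℕ) = 0}
  add_mem' := by
    intro a b ha hb β hβ
    have h1 := ha β hβ
    have h2 := hb β hβ
    calc ∑ j : Fin n, (a + b) j * β ^ (j : ℕ)
        = (∑ j : Fin n, a j * β ^ (j : ℕ)) + ∑ j : Fin n, b j * β ^ (j : ℕ) := by
          rw [← Finset.sum_add_distrib]
          exact Finset.sum_congr rfl (by intro j _; simp [add_mul])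
      _ = 0 := by rw [h1, h2, add_zero]
  zero_mem' := by intro β hβ; simp
  smul_mem' := by
    intro t a ha β hβ
    have h1 := ha β hβ
    calc ∑ j : Fin n, (t • a) j * β ^ (j : ℕ)
        = t * ∑ j : Fin n, a j * β ^ (j : ℕ) := by
          rw [Finset.mul_sum]
          exact Finset.sum_congr rfl (by intro j _; simp [mul_assoc])
      _ = 0 := by rw [h1, mul_zero]

/-- Minimum distance: least Hamming weight of a nonzero codeword. -/
noncomputable def minDist {n : ℕ} {F : Type*} [Field F] (C : Submodule F (Fin n → F)) : ℕ :=
  sInf {w | ∃ c ∈ C, c ≠ 0 ∧ hwt c = w}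

/-- The dual code under the standard bilinear form. -/
def dualCode {n : ℕ} {F : Type*} [Field F] (C : Submodule F (Fin n → F)) :
    Submodule F (Fin n → F) where
  carrier := {y | ∀ c ∈ C, ∑ i : Fin n, c i * y i = 0}
  add_mem' := by
    intro a b ha hb c hc
    have h1 := ha c hc
    have h2 := hb c hc
    calc ∑ i : Fin n, c i * (a + b) i
        = (∑ i : Fin n, c i * a i) + ∑ i : Fin n, c i * b i := by
          rw [← Finset.sum_add_distrib]
          exact Finset.sum_congr rfl (by intro j _; simp [mul_add])
      _ = 0 := by rw [h1, h2, add_zero]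
  zero_mem' := by intro c hc; simp
  smul_mem' := by
    intro t a ha c hc
    have h1 := ha c hc
    calc ∑ i : Fin n, c i * (t • a) i
        = t * ∑ i : Fin n, c i * a i := by
          rw [Finset.mul_sum]
          exact Finset.sum_congr rfl (by intro j _; simp [mul_assoc]; ring)
      _ = 0 := by rw [h1, mul_zero]



/-- The coset `α^l G_m` of the subgroup `G_m = {α^{jm}}` of the n-th roots of unity. -/
def coset {F : Type*} [Field F] (α : F) (n : ℕ) (l : ℤ) (m : ℕ) : Set F :=
  {β | ∃ j : ℕ, j < n / m ∧ β = α ^ (l + (j : ℤ) * m)}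


section Aux

variable {F : Type*} [Field F]

lemma geom_zero {β : F} {N : ℕ} (h1 : β ^ N = 1) (h2 : β ≠ 1) :
    ∑ k ∈ Finset.range N, β ^ k = 0 := by
  rw [geom_sum_eq h2, h1, sub_self, zero_div]

lemma sum_div_reindex {M : Type*} [AddCommMonoid M] {u m n : ℕ} (hu : 0 < u) (hn : u * m = n)
    (g : ℕ → M) :
    ∑ j ∈ Finset.range n, (if u ∣ j then g (j / u) else 0) = ∑ i ∈ Finset.range m, g i := by
  classical
  rw [← Finset.sum_filter]
  apply Finset.sum_nbij' (fun j => j / u) (fun i => i * u)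
  · intro a ha
    simp only [Finset.mem_filter, Finset.mem_range] at ha ⊢
    obtain ⟨h1, h2⟩ := ha
    obtain ⟨b, rfl⟩ := h2
    rw [Nat.mul_div_cancel_left b hu]
    rw [← hn] at h1
    exact Nat.lt_of_mul_lt_mul_left h1
  · intro a ha
    simp only [Finset.mem_filter, Finset.mem_range] at ha ⊢
    refine ⟨?_, dvd_mul_left u a⟩
    rw [← hn, Nat.mul_comm u m]
    exact (Nat.mul_lt_mul_right hu).mpr ha
  · intro a ha
    simp only [Finset.mem_filter] at ha
    exact Nat.div_mul_cancel ha.2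
  · intro a _
    exact Nat.mul_div_cancel a hu
  · intro a _
    rfl

lemma coord_mem {n : ℕ} (W : Submodule F (Fin n → F)) (d : Fin n → F)
    (hd : Function.Injective d)
    (hW : ∀ y ∈ W, (fun k => d k * y k) ∈ W)
    (v : Fin n → F) (hv : ∀ k, (∀ y ∈ W, y k = 0) → v k = 0) : v ∈ W := by
  classical
  have key : ∀ T : Finset (Fin n), ∀ y ∈ W, (fun i => (∏ j ∈ T, (d i - d j)) * y i) ∈ W := by
    intro T
    induction T using Finset.induction_on with
    | empty => intro y hy; simpa using hy
    | insert a T ha ih =>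
      intro y hy
      have hz := ih y hy
      have heq : (fun i => (∏ j ∈ insert a T, (d i - d j)) * y i)
          = (fun k => d k * ((∏ j ∈ T, (d k - d j)) * y k))
            - d a • (fun i => (∏ j ∈ T, (d i - d j)) * y i) := by
        funext i
        simp only [Pi.sub_apply, Pi.smul_apply, smul_eq_mul, Finset.prod_insert ha]
        ring
      rw [heq]
      exact Submodule.sub_mem _ (hW _ hz) (Submodule.smul_mem _ _ hz)
  have unit : ∀ k : Fin n, v k ≠ 0 → (fun i : Fin n => if i = k then v k else 0) ∈ W := by
    intro k hk
    have h1 : ¬ (∀ y ∈ W, y k = 0) := fun h => hk (hv k h)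
    push_neg at h1
    obtain ⟨y, hy, hyk⟩ := h1
    set z : Fin n → F := fun i => (∏ j ∈ Finset.univ.erase k, (d i - d j)) * y i with hzdef
    have hzW : z ∈ W := key _ y hy
    have hzk : z k ≠ 0 := by
      apply mul_ne_zero _ hyk
      rw [Finset.prod_ne_zero_iff]
      intro j hj
      exact sub_ne_zero_of_ne (fun h => (Finset.mem_erase.mp hj).1 (hd h).symm)
    have heq : (fun i : Fin n => if i = k then v k else 0) = (v k / z k) • z := by
      funext i
      by_cases h : i = k
      · subst h
        simp [div_mul_cancel₀ _ hzk]
      · have hzi : z i = 0 := by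
          apply mul_eq_zero_of_left
          exact Finset.prod_eq_zero (Finset.mem_erase.mpr ⟨h, Finset.mem_univ i⟩) (sub_self (d i))
        simp [h, hzi]
    rw [heq]
    exact Submodule.smul_mem _ _ hzW
  have hsum : v = ∑ k : Fin n, (fun i : Fin n => if i = k then v k else 0) := by
    funext i
    rw [Finset.sum_apply]
    simp
  rw [hsum]
  apply Submodule.sum_mem
  intro k _
  by_cases hk : v k = 0
  · have : (fun i : Fin n => if i = k then v k else 0) = 0 := by
      funext i; simp [hk]
    rw [this]; exact Submodule.zero_mem _
  · exact unit k hk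

/-- The discrete Fourier transform as a linear map. -/
noncomputable def dft {n : ℕ} (α : F) : (Fin n → F) →ₗ[F] (Fin n → F) where
  toFun c := fun k => ∑ j : Fin n, c j * α ^ ((j : ℕ) * (k : ℕ))
  map_add' a b := by
    funext k
    simp [add_mul, Finset.sum_add_distrib]
  map_smul' t a := by
    funext k
    simp [Finset.mul_sum, mul_assoc]

lemma dft_apply {n : ℕ} (α : F) (c : Fin n → F) (k : Fin n) :
    dft α c k = ∑ j : Fin n, c j * α ^ ((j : ℕ) * (k : ℕ)) := rfl

lemma dft_inj {n : ℕ} [NeZero n] {α : F} (hα : IsPrimitiveRoot α n) (hnF : (n : F) ≠ 0) :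
    Function.Injective (dft (n := n) α) := by
  have hn : 0 < n := Nat.pos_of_ne_zero (NeZero.ne n)
  have hα1 : α ^ n = 1 := hα.pow_eq_one
  suffices h : ∀ c : Fin n → F, dft α c = 0 → c = 0 by
    intro a b hab
    have h2 : dft (n := n) α (a - b) = 0 := by rw [map_sub, hab, sub_self]
    have := h _ h2
    exact sub_eq_zero.mp this
  intro c h0
  funext i
  have inner : ∀ j : Fin n, ∑ k : Fin n, α ^ (((j : ℕ) + (n - (i : ℕ))) * (k : ℕ))
      = if j = i then (n : F) else 0 := by
    intro j
    by_cases hji : j = i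
    · subst hji
      have hni : (j : ℕ) + (n - (j : ℕ)) = n := by omega
      rw [hni]
      simp [pow_mul, hα1]
    · rw [if_neg hji]
      have hne1 : α ^ ((j : ℕ) + (n - (i : ℕ))) ≠ 1 := by
        intro heq
        have hdvd := (hα.pow_eq_one_iff_dvd _).mp heq
        have hi : (i : ℕ) < n := i.isLt
        have hj : (j : ℕ) < n := j.isLt
        have hji' : (j : ℕ) ≠ (i : ℕ) := fun h => hji (Fin.ext h)
        have hb : (j : ℕ) + (n - (i : ℕ)) = n ∨ (j : ℕ) + (n - (i : ℕ)) = 0 ∨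
            ((j : ℕ) + (n - (i : ℕ)) ≠ 0 ∧ (j : ℕ) + (n - (i : ℕ)) < 2 * n ∧
              (j : ℕ) + (n - (i : ℕ)) ≠ n) := by omega
        rcases hb with h | h | ⟨h1, h2, h3⟩
        · omega
        · omega
        · obtain ⟨w, hw⟩ := hdvd
          have hw3 : w = 0 ∨ w = 1 ∨ 2 ≤ w := by omega
          rcases hw3 with rfl | rfl | hw3
          · omega
          · omega
          · have : n * 2 ≤ n * w := Nat.mul_le_mul_left n hw3
            omega
      calc ∑ k : Fin n, α ^ (((j : ℕ) + (n - (i : ℕ))) * (k : ℕ))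
          = ∑ k : Fin n, (α ^ ((j : ℕ) + (n - (i : ℕ)))) ^ (k : ℕ) := by
            apply Finset.sum_congr rfl
            intro k _
            rw [pow_mul]
        _ = ∑ k ∈ Finset.range n, (α ^ ((j : ℕ) + (n - (i : ℕ)))) ^ k := by
            rw [Fin.sum_univ_eq_sum_range]
        _ = 0 := geom_zero (by rw [← pow_mul, mul_comm, pow_mul, hα1, one_pow]) hne1
  have calc1 : ∑ k : Fin n, (dft α c k) * α ^ ((n - (i : ℕ)) * (k : ℕ)) = (n : F) * c i := by
    calc ∑ k : Fin n, (dft α c k) * α ^ ((n - (i : ℕ)) * (k : ℕ))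
        = ∑ k : Fin n, ∑ j : Fin n, c j * α ^ (((j : ℕ) + (n - (i : ℕ))) * (k : ℕ)) := by
          apply Finset.sum_congr rfl
          intro k _
          rw [dft_apply, Finset.sum_mul]
          apply Finset.sum_congr rfl
          intro j _
          rw [mul_assoc, ← pow_add, ← add_mul]
      _ = ∑ j : Fin n, c j * ∑ k : Fin n, α ^ (((j : ℕ) + (n - (i : ℕ))) * (k : ℕ)) := by
          rw [Finset.sum_comm]
          apply Finset.sum_congr rfl
          intro j _
          rw [Finset.mul_sum]
      _ = ∑ j : Fin n, c j * (if j = i then (n : F) else 0) := by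
          apply Finset.sum_congr rfl
          intro j _
          rw [inner j]
      _ = (n : F) * c i := by
          rw [Finset.sum_eq_single i]
          · rw [if_pos rfl, mul_comm]
          · intro j _ hji
            rw [if_neg hji, mul_zero]
          · intro h
            exact absurd (Finset.mem_univ i) h
  rw [h0] at calc1
  simp only [Pi.zero_apply, zero_mul, Finset.sum_const_zero] at calc1
  have := calc1.symm
  rcases mul_eq_zero.mp this with h | h
  · exact absurd h hnF
  · exact h

end Aux

/-- if some coset `α^l G_m` is disjoint from the defining set, and the defining
set contains `α^{s+l+tm}` for `s = 1,…,m−1`, then the minimum distance is exactly `m`. -/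
theorem stmt14 {F : Type*} [Field F] [Fintype F] (q n : ℕ) [NeZero n]
    (hq : Fintype.card F = q) (hq2 : ∃ e : ℕ, 0 < e ∧ q = 2 ^ e) (hn : n ∣ q - 1)
    (α : F) (hα : IsPrimitiveRoot α n)
    (m : ℕ) (hm : 0 < m) (hmn : m ∣ n)
    (D : Submodule F (Fin n → F)) (hcyc : IsCyclicCode D) (hD : D ≠ ⊥)
    (l t : ℤ)
    (hdisj : Disjoint (coset α n l m) (definingSet D))
    (hin : ∀ s : ℕ, 1 ≤ s → s ≤ m - 1 → α ^ ((s : ℤ) + l + t * m) ∈ definingSet D) :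
    minDist D = m := by
  classical
  have hn0 : 0 < n := Nat.pos_of_ne_zero (NeZero.ne n)
  have hα1 : α ^ n = 1 := hα.pow_eq_one
  have hα0 : α ≠ 0 := by
    intro h
    rw [h, zero_pow hn0.ne'] at hα1
    exact zero_ne_one hα1
  obtain ⟨u, hun⟩ := hmn
  have hu : 0 < u := by
    rcases Nat.eq_zero_or_pos u with h | h
    · rw [h, Nat.mul_zero] at hun; omega
    · exact h
  have hnum : u * m = n := by rw [hun]; ring
  have hndm : n / m = u := by rw [hun]; exact Nat.mul_div_cancel_left u hm
  -- characteristic 2 facts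
  have hchar2 : (2 : F) = 0 := by
    obtain ⟨e, he, hqe⟩ := hq2
    haveI : CharP F (ringChar F) := ringChar.charP F
    obtain ⟨k, hprime, hcard⟩ := FiniteField.card F (ringChar F)
    have hr2 : ringChar F = 2 := by
      have hdvd : ringChar F ∣ 2 ^ e := by
        rw [← hqe, ← hq, hcard]
        exact dvd_pow_self _ k.pos.ne'
      exact (Nat.prime_dvd_prime_iff_eq hprime Nat.prime_two).mp
        (hprime.dvd_of_dvd_pow hdvd)
    have := CharP.cast_eq_zero F (ringChar F)
    rw [hr2] at this
    exact_mod_cast this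
  have hodd : n % 2 = 1 := by
    obtain ⟨e, he, hqe⟩ := hq2
    have h2 : ¬ (2 ∣ n) := by
      intro h
      have hdvd : (2 : ℕ) ∣ q - 1 := h.trans hn
      have h2e : (2 : ℕ) ∣ 2 ^ e := dvd_pow_self 2 he.ne'
      have h2le : 2 ≤ 2 ^ e := Nat.one_lt_two_pow he.ne'
      rw [hqe] at hdvd
      omega
    omega
  have hnF : (n : F) ≠ 0 := by
    have hn2 : n = 2 * (n / 2) + 1 := by omega
    rw [hn2]
    push_cast
    rw [hchar2]
    simp
  have hpowmod : ∀ a : ℕ, α ^ (a % n) = α ^ a := by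
    intro a
    conv_rhs => rw [← Nat.mod_add_div a n]
    rw [pow_add, pow_mul, hα1, one_pow, mul_one]
  have hnatz : ∀ (a : ℤ) (b : ℕ), (α ^ a) ^ b = α ^ (a * (b : ℤ)) := by
    intro a b
    rw [← zpow_natCast (α ^ a) b, ← zpow_mul]
  -- the candidate codeword v of weight m
  set γ : F := α ^ (-(l * (u : ℤ))) with hγdef
  have hγ0 : γ ≠ 0 := zpow_ne_zero _ hα0
  set v : Fin n → F := fun j => if u ∣ (j : ℕ) then γ ^ ((j : ℕ) / u) else 0 with hvdef
  have hveval : ∀ β : F, ∑ j : Fin n, v j * β ^ (j : ℕ)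
      = ∑ i ∈ Finset.range m, (γ * β ^ u) ^ i := by
    intro β
    have hterm : ∀ j : Fin n, v j * β ^ (j : ℕ)
        = if u ∣ (j : ℕ) then (γ * β ^ u) ^ ((j : ℕ) / u) else 0 := by
      intro j
      by_cases h : u ∣ (j : ℕ)
      · rw [hvdef]
        simp only [if_pos h]
        rw [mul_pow, ← pow_mul, Nat.mul_div_cancel' h]
      · simp [hvdef, h]
    rw [Finset.sum_congr rfl (fun j _ => hterm j),
      Fin.sum_univ_eq_sum_range (fun j => if u ∣ j then (γ * β ^ u) ^ (j / u) else 0) n]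
    exact sum_div_reindex hu hnum _
  -- v evaluates to zero at α^k when m does not divide k - l
  have hvzero : ∀ k : ℕ, ¬ ((m : ℤ) ∣ ((k : ℤ) - l)) →
      ∑ j : Fin n, v j * (α ^ k) ^ (j : ℕ) = 0 := by
    intro k hk
    rw [hveval]
    have hr : γ * (α ^ k) ^ u = α ^ (((k : ℤ) - l) * (u : ℤ)) := by
      rw [hγdef, ← zpow_natCast α k, ← zpow_natCast (α ^ (k : ℤ)) u, ← zpow_mul,
        ← zpow_add₀ hα0]
      congr 1
      ring
    rw [hr]
    apply geom_zero
    · rw [← zpow_natCast (α ^ (((k : ℤ) - l) * (u : ℤ))) m, ← zpow_mul]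
      apply (hα.zpow_eq_one_iff_dvd _).mpr
      refine ⟨(k : ℤ) - l, ?_⟩
      push_cast [← hnum]
      ring
    · intro h1
      have hdvd := (hα.zpow_eq_one_iff_dvd _).mp h1
      apply hk
      have hcast : ((n : ℕ) : ℤ) = (u : ℤ) * (m : ℤ) := by push_cast [← hnum]; ring
      rw [hcast] at hdvd
      have hu0 : (u : ℤ) ≠ 0 := by exact_mod_cast hu.ne'
      have : (u : ℤ) * (m : ℤ) ∣ (u : ℤ) * (((k : ℤ) - l)) := by
        obtain ⟨w, hw⟩ := hdvd
        exact ⟨w, by linarith [hw]⟩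
      exact (mul_dvd_mul_iff_left hu0).mp this
  -- if m divides k - l then α^k is in the coset
  have hcosetmem : ∀ k : ℕ, ((m : ℤ) ∣ ((k : ℤ) - l)) → (α ^ k) ∈ coset α n l m := by
    intro k hdvd
    obtain ⟨w, hw⟩ := hdvd
    have hu0 : (0 : ℤ) < (u : ℤ) := by exact_mod_cast hu
    refine ⟨(w % (u : ℤ)).toNat, ?_, ?_⟩
    · rw [hndm]
      have h1 : w % (u : ℤ) < (u : ℤ) := Int.emod_lt_of_pos w hu0
      have h2 : 0 ≤ w % (u : ℤ) := Int.emod_nonneg w hu0.ne'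
      omega
    · have hj : (((w % (u : ℤ)).toNat : ℤ)) = w % (u : ℤ) :=
        Int.toNat_of_nonneg (Int.emod_nonneg w hu0.ne')
      have hkey : α ^ ((l + ((w % (u : ℤ)).toNat : ℤ) * m) - (k : ℤ)) = 1 := by
        apply (hα.zpow_eq_one_iff_dvd _).mpr
        refine ⟨-(w / (u : ℤ)), ?_⟩
        rw [hj, Int.emod_def]
        have hcast : ((n : ℕ) : ℤ) = (u : ℤ) * (m : ℤ) := by push_cast [← hnum]; ring
        rw [hcast]
        have hkl : (k : ℤ) = l + (m : ℤ) * w := by omega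
        rw [hkl]
        ring
      have : α ^ (l + ((w % (u : ℤ)).toNat : ℤ) * m)
          = α ^ ((l + ((w % (u : ℤ)).toNat : ℤ) * m - (k : ℤ))) * α ^ ((k : ℤ)) := by
        rw [← zpow_add₀ hα0]
        congr 1
        ring
      rw [← zpow_natCast α k, this, hkey, one_mul]
  -- the DFT and the image of D
  set E : (Fin n → F) →ₗ[F] (Fin n → F) := dft α with hEdef
  have hEapp : ∀ c : Fin n → F, ∀ k : Fin n,
      E c k = ∑ j : Fin n, c j * (α ^ (k : ℕ)) ^ (j : ℕ) := by
    intro c k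
    rw [hEdef, dft_apply]
    apply Finset.sum_congr rfl
    intro j _
    rw [← pow_mul, Nat.mul_comm]
  set W : Submodule F (Fin n → F) := Submodule.map E D with hWdef
  have dinj : Function.Injective (fun k : Fin n => α ^ (k : ℕ)) := by
    intro a b h
    exact Fin.ext (hα.pow_inj a.isLt b.isLt h)
  have hWmul : ∀ y ∈ W, (fun k : Fin n => α ^ (k : ℕ) * y k) ∈ W := by
    intro y hy
    obtain ⟨c, hcD, rfl⟩ := hy
    refine ⟨fun i => c (i - 1), hcyc c hcD, ?_⟩
    funext k
    rw [hEdef, dft_apply]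
    have := Fintype.sum_equiv (Equiv.addRight (1 : Fin n))
      (fun i : Fin n => c i * α ^ (((i : ℕ) + 1) * (k : ℕ)))
      (fun j : Fin n => c (j - 1) * α ^ ((j : ℕ) * (k : ℕ))) ?_
    · rw [← this]
      rw [dft_apply, Finset.mul_sum]
      apply Finset.sum_congr rfl
      intro i _
      rw [add_mul, one_mul, pow_add, pow_mul]
      ring
    · intro i
      have h1 : (i + 1 : Fin n) - 1 = i := by
        rw [add_sub_cancel_right]
      have hone : ((1 : Fin n) : ℕ) = 1 % n := Fin.val_one' n
      have h2 : α ^ (((i + (1 : Fin n) : Fin n)) : ℕ) = α ^ ((i : ℕ) + 1) := by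
        rw [Fin.val_add, hone, hpowmod ((i : ℕ) + 1 % n), pow_add, hpowmod 1, ← pow_add]
      show c i * α ^ (((i : ℕ) + 1) * (k : ℕ)) = c ((i + 1 : Fin n) - 1) * α ^ (((i + 1 : Fin n) : ℕ) * (k : ℕ))
      rw [h1, pow_mul, pow_mul, h2]
  -- v is in D
  have hvD : v ∈ D := by
    have hEvW : E v ∈ W := by
      apply coord_mem W (fun k : Fin n => α ^ (k : ℕ)) dinj hWmul
      intro k hk
      have hzmem : (α ^ ((k : Fin n) : ℕ)) ∈ definingSet D := by
        constructor
        · rw [← pow_mul, Nat.mul_comm, pow_mul, hα1, one_pow]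
        · intro c hcD
          have := hk (E c) ⟨c, hcD, rfl⟩
          rw [hEapp] at this
          exact this
      have hnotco : (α ^ ((k : Fin n) : ℕ)) ∉ coset α n l m := by
        intro hco
        exact Set.disjoint_left.mp hdisj hco hzmem
      have hnd : ¬ ((m : ℤ) ∣ (((k : Fin n) : ℕ) : ℤ) - l) := fun h => hnotco (hcosetmem _ h)
      rw [hEapp]
      exact hvzero _ hnd
    obtain ⟨c, hcD, hce⟩ := hEvW
    have := dft_inj hα hnF hce
    rwa [← this]
  -- v is nonzero with weight m
  have hv0 : v ⟨0, hn0⟩ = 1 := by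
    rw [hvdef]
    simp
  have hvne : v ≠ 0 := by
    intro h
    rw [h] at hv0
    simp at hv0
  have hwtc : ∀ c : Fin n → F, hwt c = (Finset.univ.filter fun i => c i ≠ 0).card := by
    intro c
    rw [hwt, Nat.card_eq_fintype_card, Fintype.card_subtype]
  have hwtv : hwt v = m := by
    rw [hwtc]
    have hfil : (Finset.univ.filter fun j : Fin n => v j ≠ 0)
        = Finset.univ.filter (fun j : Fin n => u ∣ (j : ℕ)) := by
      apply Finset.filter_congr
      intro j _
      constructor
      · intro h
        by_contra hdvd
        apply h
        simp [hvdef, hdvd]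
      · intro h
        rw [hvdef]
        simp only [if_pos h]
        exact pow_ne_zero _ hγ0
    rw [hfil, Finset.card_filter, Fin.sum_univ_eq_sum_range (fun j => if u ∣ j then 1 else 0) n]
    have := sum_div_reindex (M := ℕ) hu hnum (fun _ => 1)
    rw [this]
    simp
  have hmem : m ∈ {w | ∃ c ∈ D, c ≠ 0 ∧ hwt c = w} := ⟨v, hvD, hvne, hwtv⟩
  -- lower bound: every nonzero codeword has weight at least m
  have hlow : ∀ w ∈ {w | ∃ c ∈ D, c ≠ 0 ∧ hwt c = w}, m ≤ w := by
    rintro w ⟨c, hcD, hc0, hwc⟩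
    by_contra hlt
    push_neg at hlt
    set P : Finset (Fin n) := Finset.univ.filter (fun i => c i ≠ 0) with hPdef
    have hPcard : P.card = w := by rw [hPdef, ← hwtc, hwc]
    have e : Fin w ≃ P := (P.equivFin.trans (finCongr hPcard)).symm
    set σ : Fin w → Fin n := fun k => ((e k : Fin n)) with hσdef
    have hσinj : Function.Injective σ := fun a b h =>
      e.injective (Subtype.ext h)
    have hcσ : ∀ k : Fin w, c (σ k) ≠ 0 := by
      intro k
      exact (Finset.mem_filter.mp (e k).2).2
    set x : Fin w → F := fun k => α ^ ((σ k : Fin n) : ℕ) with hxdef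
    have hxinj : Function.Injective x := by
      intro a b h
      exact hσinj (Fin.ext (hα.pow_inj (σ a).isLt (σ b).isLt h))
    have hx0 : ∀ k, x k ≠ 0 := fun k => pow_ne_zero _ hα0
    set d : Fin w → F := fun k => x k ^ (l + t * (m : ℤ) + 1) with hddef
    have hd0 : ∀ k, d k ≠ 0 := fun k => zpow_ne_zero _ (hx0 k)
    set M : Matrix (Fin w) (Fin w) F := Matrix.of fun s k => x k ^ (s : ℕ) * d k with hMdef
    have hdet : M.det ≠ 0 := by
      have hMeq : M = (Matrix.vandermonde x).transpose * Matrix.diagonal d := by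
        ext s k
        rw [Matrix.mul_diagonal, Matrix.transpose_apply, Matrix.vandermonde_apply]
        rfl
      rw [hMeq, Matrix.det_mul, Matrix.det_transpose, Matrix.det_vandermonde,
        Matrix.det_diagonal]
      apply mul_ne_zero
      · rw [Finset.prod_ne_zero_iff]
        intro i _
        rw [Finset.prod_ne_zero_iff]
        intro j hj
        exact sub_ne_zero_of_ne fun h => (Finset.mem_Ioi.mp hj).ne' (hxinj h)
      · rw [Finset.prod_ne_zero_iff]
        intro k _
        exact hd0 k
    have hmul : M.mulVec (fun k => c (σ k)) = 0 := by
      funext s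
      have hs1 : 1 ≤ (s : ℕ) + 1 := le_add_self
      have hs2 : (s : ℕ) + 1 ≤ m - 1 := by
        have := s.isLt
        omega
      have hβ := hin ((s : ℕ) + 1) hs1 hs2
      set β : F := α ^ ((((s : ℕ) + 1 : ℕ) : ℤ) + l + t * (m : ℤ)) with hβdef
      have hsum0 : ∑ j : Fin n, c j * β ^ (j : ℕ) = 0 := hβ.2 c hcD
      have hsumP : ∑ j ∈ P, c j * β ^ (j : ℕ) = ∑ j : Fin n, c j * β ^ (j : ℕ) := by
        apply Finset.sum_subset P.subset_univ
        intro j _ hj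
        rw [hPdef, Finset.mem_filter] at hj
        push_neg at hj
        rw [hj (Finset.mem_univ j), zero_mul]
      have hsumE : ∑ j ∈ P, c j * β ^ (j : ℕ) = ∑ k : Fin w, c (σ k) * β ^ ((σ k : Fin n) : ℕ) := by
        rw [← Finset.sum_coe_sort P (fun j => c j * β ^ (j : ℕ))]
        exact (Equiv.sum_comp e (fun p : P => c (p : Fin n) * β ^ ((p : Fin n) : ℕ))).symm
      have hterm : ∀ k : Fin w, β ^ ((σ k : Fin n) : ℕ) = x k ^ (s : ℕ) * d k := by
        intro k
        simp only [hβdef, hddef, hxdef]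
        rw [← zpow_natCast α ((σ k : Fin n) : ℕ)]
        rw [hnatz ((((s : ℕ) + 1 : ℕ) : ℤ) + l + t * (m : ℤ)) ((σ k : Fin n) : ℕ)]
        rw [hnatz ((((σ k : Fin n) : ℕ) : ℤ)) (s : ℕ)]
        rw [← zpow_mul, ← zpow_add₀ hα0]
        congr 1
        push_cast
        ring
      show ∑ k : Fin w, M s k * c (σ k) = 0
      calc ∑ k : Fin w, M s k * c (σ k)
          = ∑ k : Fin w, c (σ k) * β ^ ((σ k : Fin n) : ℕ) := by
            apply Finset.sum_congr rfl
            intro k _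
            rw [hterm k, hMdef]
            simp only [Matrix.of_apply]
            ring
        _ = 0 := by rw [← hsumE, hsumP, hsum0]
    have hzero := Matrix.eq_zero_of_mulVec_eq_zero hdet hmul
    -- derive a contradiction
    obtain ⟨i, hi⟩ := Function.ne_iff.mp hc0
    have hiP : i ∈ P := by
      rw [hPdef, Finset.mem_filter]
      exact ⟨Finset.mem_univ i, hi⟩
    have : c (σ (e.symm ⟨i, hiP⟩)) = 0 := congrFun hzero (e.symm ⟨i, hiP⟩)
    rw [hσdef] at this
    simp only [Equiv.apply_symm_apply] at this
    exact hi this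
  -- conclude
  apply le_antisymm
  · exact Nat.sInf_le hmem
  · exact le_csInf ⟨m, hmem⟩ hlow


end LRC
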